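/- Let d ≥ 2, α > 0, and f(r, d, α) = ∫_0^π sin^d θ / (r² + 1 − 2r cos θ)^{(d+α)/2} dθ. Then for every integer n ≥ 0, the 2n-th derivative of f in r at 0 equals B(1/2,(d+1)/2) · (2n−1)!! · α(α+2)⋯(α+2n−2) · [(d+α)(d+α+2)⋯(d+α+2n−2)] / [(d+2)(d+4)⋯(d+2n)]. In particular ∂_r^{2n} f(0,d,α) > 0 for all n ≥ 0. -/

import Mathlib

open Real Finset MeasureTheory Metric intervalIntegral
open scoped Topology
namespace Stmt5Aux



noncomputable def J (d : ℕ) (q : ℝ) (s : ℝ) : ℝ :=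
  ∫ θ in (0:ℝ)..π, Real.sin θ ^ d * (s ^ 2 + 1 - 2 * s * Real.cos θ) ^ q

noncomputable def J1 (d : ℕ) (q : ℝ) (s : ℝ) : ℝ :=
  ∫ θ in (0:ℝ)..π, Real.sin θ ^ d *
    (q * (s ^ 2 + 1 - 2 * s * Real.cos θ) ^ (q - 1) * (2 * s - 2 * Real.cos θ))

lemma abs_smul_cos_le {s : ℝ} (θ : ℝ) : |s * Real.cos θ| ≤ |s| := by
  rw [abs_mul]
  have := Real.abs_cos_le_one θ
  have := abs_nonneg s
  nlinarith

lemma base_pos {s : ℝ} (hs : |s| < 1) (θ : ℝ) : 0 < s ^ 2 + 1 - 2 * s * Real.cos θ := by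
  have h1 : s * Real.cos θ ≤ |s| := (le_abs_self _).trans (abs_smul_cos_le θ)
  have h2 : 0 < (1 - |s|) ^ 2 := pow_pos (by linarith) 2
  nlinarith [sq_abs s]

lemma base_le {s : ℝ} (hs : |s| ≤ 1/2) (θ : ℝ) :
    1/4 ≤ s ^ 2 + 1 - 2 * s * Real.cos θ ∧ s ^ 2 + 1 - 2 * s * Real.cos θ ≤ 4 := by
  have h1 : s * Real.cos θ ≤ |s| := (le_abs_self _).trans (abs_smul_cos_le θ)
  have h2 : -(s * Real.cos θ) ≤ |s| := (neg_le_abs _).trans (abs_smul_cos_le θ)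
  have h3 := abs_nonneg s
  constructor <;> nlinarith [sq_abs s]

lemma rpow_bound {x : ℝ} (h1 : 1/4 ≤ x) (h2 : x ≤ 4) (r : ℝ) : x ^ r ≤ 4 ^ |r| := by
  rcases le_or_gt 0 r with hr | hr
  · rw [abs_of_nonneg hr]
    exact Real.rpow_le_rpow (by linarith) h2 hr
  · rw [abs_of_neg hr]
    calc x ^ r ≤ (1/4 : ℝ) ^ r := Real.rpow_le_rpow_of_nonpos (by norm_num) h1 hr.le
    _ = 4 ^ (-r) := by
        rw [one_div, Real.inv_rpow (by norm_num : (0:ℝ) ≤ 4),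
          ← Real.rpow_neg (by norm_num : (0:ℝ) ≤ 4)]

lemma cont_base {s : ℝ} : Continuous fun θ : ℝ => s ^ 2 + 1 - 2 * s * Real.cos θ :=
  continuous_const.sub (continuous_const.mul Real.continuous_cos)

lemma cont_integrand (d : ℕ) (q : ℝ) {s : ℝ} (hs : |s| < 1) :
    Continuous fun θ : ℝ => Real.sin θ ^ d * (s ^ 2 + 1 - 2 * s * Real.cos θ) ^ q :=
  (Real.continuous_sin.pow d).mul
    (cont_base.rpow_const fun θ => Or.inl (base_pos hs θ).ne')

lemma cont_integrand1 (d : ℕ) (q : ℝ) {s : ℝ} (hs : |s| < 1) :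
    Continuous fun θ : ℝ => Real.sin θ ^ d *
      (q * (s ^ 2 + 1 - 2 * s * Real.cos θ) ^ (q - 1) * (2 * s - 2 * Real.cos θ)) :=
  (Real.continuous_sin.pow d).mul
    ((continuous_const.mul (cont_base.rpow_const fun θ => Or.inl (base_pos hs θ).ne')).mul
      (continuous_const.sub (continuous_const.mul Real.continuous_cos)))



lemma abs_w_le {x c : ℝ} (hx : |x| ≤ 1/2) (hc : |c| ≤ 1) : |2 * x - 2 * c| ≤ 3 := by
  rw [abs_le] at *
  constructor <;> nlinarith [hx.1, hx.2, hc.1, hc.2]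

lemma hasDerivAt_base (θ x : ℝ) :
    HasDerivAt (fun x : ℝ => x ^ 2 + 1 - 2 * x * Real.cos θ) (2 * x - 2 * Real.cos θ) x := by
  have h1 : HasDerivAt (fun x : ℝ => x ^ 2 + 1) (2 * x) x := by
    simpa using ((hasDerivAt_pow 2 x).add_const 1)
  have h2 : HasDerivAt (fun x : ℝ => 2 * x * Real.cos θ) (2 * Real.cos θ) x := by
    simpa using (((hasDerivAt_id x).const_mul 2).mul_const (Real.cos θ))
  exact h1.sub h2

lemma hasDerivAt_integrand (d : ℕ) (q : ℝ) (θ : ℝ) {x : ℝ} (hx : |x| < 1) :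
    HasDerivAt (fun x : ℝ => Real.sin θ ^ d * (x ^ 2 + 1 - 2 * x * Real.cos θ) ^ q)
      (Real.sin θ ^ d *
        (q * (x ^ 2 + 1 - 2 * x * Real.cos θ) ^ (q - 1) * (2 * x - 2 * Real.cos θ))) x := by
  have h := (((hasDerivAt_base θ x).rpow_const (p := q)
    (Or.inl (base_pos hx θ).ne')).const_mul (Real.sin θ ^ d) : HasDerivAt _ _ x)
  refine h.congr_deriv ?_
  ring

lemma mem_ball_abs {x : ℝ} (r : ℝ) : x ∈ ball (0:ℝ) r ↔ |x| < r := by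
  rw [mem_ball, Real.dist_eq, sub_zero]

lemma hasDerivAt_J (d : ℕ) (q : ℝ) {s₀ : ℝ} (hs : |s₀| < 1/2) :
    HasDerivAt (J d q) (J1 d q s₀) s₀ := by
  have hs1 : |s₀| < 1 := hs.trans (by norm_num)
  have hε0 : 0 < 1/2 - |s₀| := by linarith
  have key := intervalIntegral.hasDerivAt_integral_of_dominated_loc_of_deriv_le
    (F := fun x θ => Real.sin θ ^ d * (x ^ 2 + 1 - 2 * x * Real.cos θ) ^ q)
    (F' := fun x θ => Real.sin θ ^ d *
      (q * (x ^ 2 + 1 - 2 * x * Real.cos θ) ^ (q - 1) * (2 * x - 2 * Real.cos θ)))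
    (bound := fun _ => |q| * 4 ^ |q - 1| * 3) (a := 0) (b := π) (μ := volume)
    (x₀ := s₀) (Metric.ball_mem_nhds s₀ hε0) ?_ ?_ ?_ ?_ ?_ ?_
  · exact key.2
  · filter_upwards [Metric.ball_mem_nhds s₀ hε0] with x hx
    have hx' : |x| < 1 := by
      rw [mem_ball, Real.dist_eq] at hx
      calc |x| ≤ |x - s₀| + |s₀| := by simpa using abs_add_le (x - s₀) s₀
      _ < 1 := by linarith
    exact (cont_integrand d q hx').aestronglyMeasurable
  · exact (cont_integrand d q hs1).intervalIntegrable 0 π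
  · exact (cont_integrand1 d q hs1).aestronglyMeasurable
  · refine Filter.Eventually.of_forall fun θ => fun _ => fun x hx => ?_
    rw [mem_ball, Real.dist_eq] at hx
    have hx2 : |x| ≤ 1/2 := by
      calc |x| ≤ |x - s₀| + |s₀| := by simpa using abs_add_le (x - s₀) s₀
      _ ≤ 1/2 := by linarith
    have hb := base_le hx2 θ
    have hbpos : (0:ℝ) < x ^ 2 + 1 - 2 * x * Real.cos θ := by linarith [hb.1]
    have hrp : (0:ℝ) < (x ^ 2 + 1 - 2 * x * Real.cos θ) ^ (q - 1) :=
      Real.rpow_pos_of_pos hbpos _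
    rw [Real.norm_eq_abs]
    calc |Real.sin θ ^ d *
        (q * (x ^ 2 + 1 - 2 * x * Real.cos θ) ^ (q - 1) * (2 * x - 2 * Real.cos θ))|
        = |Real.sin θ| ^ d * (|q| * (x ^ 2 + 1 - 2 * x * Real.cos θ) ^ (q - 1)
            * |2 * x - 2 * Real.cos θ|) := by
          rw [abs_mul, abs_mul, abs_mul, abs_pow, abs_of_pos hrp]
    _ ≤ 1 ^ d * (|q| * 4 ^ |q - 1| * 3) := by
          refine mul_le_mul (pow_le_pow_left₀ (abs_nonneg _) (Real.abs_sin_le_one θ) d)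
            (mul_le_mul (mul_le_mul_of_nonneg_left (rpow_bound hb.1 hb.2 _) (abs_nonneg q))
              (abs_w_le hx2 (Real.abs_cos_le_one θ)) (abs_nonneg _)
              (mul_nonneg (abs_nonneg q) (Real.rpow_pos_of_pos (by norm_num) _).le))
            (mul_nonneg (mul_nonneg (abs_nonneg q) hrp.le) (abs_nonneg _)) (by positivity)
    _ = |q| * 4 ^ |q - 1| * 3 := by rw [one_pow, one_mul]
  · exact intervalIntegrable_const
  · refine Filter.Eventually.of_forall fun θ => fun _ => fun x hx => ?_
    rw [mem_ball, Real.dist_eq] at hx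
    have hx' : |x| < 1 := by
      calc |x| ≤ |x - s₀| + |s₀| := by simpa using abs_add_le (x - s₀) s₀
      _ < 1 := by linarith
    exact hasDerivAt_integrand d q θ hx'


lemma hasDerivAt_integrand1 (d : ℕ) (q : ℝ) (θ : ℝ) {x : ℝ} (hx : |x| < 1) :
    HasDerivAt (fun x : ℝ => Real.sin θ ^ d *
        (q * (x ^ 2 + 1 - 2 * x * Real.cos θ) ^ (q - 1) * (2 * x - 2 * Real.cos θ)))
      (Real.sin θ ^ d * (q * ((q - 1) * (x ^ 2 + 1 - 2 * x * Real.cos θ) ^ (q - 2) *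
        ((2 * x - 2 * Real.cos θ) * (2 * x - 2 * Real.cos θ)) +
        (x ^ 2 + 1 - 2 * x * Real.cos θ) ^ (q - 1) * 2))) x := by
  have h1 : HasDerivAt (fun x : ℝ => (x ^ 2 + 1 - 2 * x * Real.cos θ) ^ (q - 1))
      ((2 * x - 2 * Real.cos θ) * (q - 1) * (x ^ 2 + 1 - 2 * x * Real.cos θ) ^ (q - 1 - 1)) x :=
    (hasDerivAt_base θ x).rpow_const (p := q - 1) (Or.inl (base_pos hx θ).ne')
  have h2 : HasDerivAt (fun x : ℝ => 2 * x - 2 * Real.cos θ) 2 x := by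
    simpa using ((hasDerivAt_id x).const_mul 2).sub_const (2 * Real.cos θ)
  have h3 := ((h1.const_mul q).mul h2).const_mul (Real.sin θ ^ d)
  refine h3.congr_deriv ?_
  have : q - 1 - 1 = q - 2 := by ring
  rw [this]
  ring

lemma hasDerivAt_J1' (d : ℕ) (q : ℝ) {s₀ : ℝ} (hs : |s₀| < 1/2) :
    HasDerivAt (J1 d q)
      (∫ θ in (0:ℝ)..π, Real.sin θ ^ d *
        (q * ((q - 1) * (s₀ ^ 2 + 1 - 2 * s₀ * Real.cos θ) ^ (q - 2) *
        ((2 * s₀ - 2 * Real.cos θ) * (2 * s₀ - 2 * Real.cos θ)) +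
        (s₀ ^ 2 + 1 - 2 * s₀ * Real.cos θ) ^ (q - 1) * 2))) s₀ := by
  have hs1 : |s₀| < 1 := hs.trans (by norm_num)
  have hε0 : 0 < 1/2 - |s₀| := by linarith
  have key := intervalIntegral.hasDerivAt_integral_of_dominated_loc_of_deriv_le
    (F := fun x θ => Real.sin θ ^ d *
      (q * (x ^ 2 + 1 - 2 * x * Real.cos θ) ^ (q - 1) * (2 * x - 2 * Real.cos θ)))
    (F' := fun x θ => Real.sin θ ^ d *
      (q * ((q - 1) * (x ^ 2 + 1 - 2 * x * Real.cos θ) ^ (q - 2) *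
        ((2 * x - 2 * Real.cos θ) * (2 * x - 2 * Real.cos θ)) +
        (x ^ 2 + 1 - 2 * x * Real.cos θ) ^ (q - 1) * 2)))
    (bound := fun _ => |q| * (|q - 1| * 4 ^ |q - 2| * (3 * 3) + 4 ^ |q - 1| * 2))
    (a := 0) (b := π) (μ := volume) (x₀ := s₀) (Metric.ball_mem_nhds s₀ hε0) ?_ ?_ ?_ ?_ ?_ ?_
  · exact key.2
  · filter_upwards [Metric.ball_mem_nhds s₀ hε0] with x hx
    have hx' : |x| < 1 := by
      rw [mem_ball, Real.dist_eq] at hx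
      calc |x| ≤ |x - s₀| + |s₀| := by simpa using abs_add_le (x - s₀) s₀
      _ < 1 := by linarith
    exact (cont_integrand1 d q hx').aestronglyMeasurable
  · exact (cont_integrand1 d q hs1).intervalIntegrable 0 π
  · have hc : Continuous fun θ : ℝ => Real.sin θ ^ d *
        (q * ((q - 1) * (s₀ ^ 2 + 1 - 2 * s₀ * Real.cos θ) ^ (q - 2) *
        ((2 * s₀ - 2 * Real.cos θ) * (2 * s₀ - 2 * Real.cos θ)) +
        (s₀ ^ 2 + 1 - 2 * s₀ * Real.cos θ) ^ (q - 1) * 2)) := by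
      have hb : ∀ r : ℝ, Continuous fun θ : ℝ => (s₀ ^ 2 + 1 - 2 * s₀ * Real.cos θ) ^ r :=
        fun r => cont_base.rpow_const fun θ => Or.inl (base_pos hs1 θ).ne'
      have hw : Continuous fun θ : ℝ => 2 * s₀ - 2 * Real.cos θ :=
        continuous_const.sub (continuous_const.mul Real.continuous_cos)
      exact (Real.continuous_sin.pow d).mul (continuous_const.mul
        (((continuous_const.mul (hb (q - 2))).mul (hw.mul hw)).add ((hb (q - 1)).mul
          continuous_const)))
    exact hc.aestronglyMeasurable
  · refine Filter.Eventually.of_forall fun θ => fun _ => fun x hx => ?_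
    rw [mem_ball, Real.dist_eq] at hx
    have hx2 : |x| ≤ 1/2 := by
      calc |x| ≤ |x - s₀| + |s₀| := by simpa using abs_add_le (x - s₀) s₀
      _ ≤ 1/2 := by linarith
    have hb := base_le hx2 θ
    have hbpos : (0:ℝ) < x ^ 2 + 1 - 2 * x * Real.cos θ := by linarith [hb.1]
    have hrp1 : (0:ℝ) < (x ^ 2 + 1 - 2 * x * Real.cos θ) ^ (q - 1) :=
      Real.rpow_pos_of_pos hbpos _
    have hrp2 : (0:ℝ) < (x ^ 2 + 1 - 2 * x * Real.cos θ) ^ (q - 2) :=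
      Real.rpow_pos_of_pos hbpos _
    have hw3 : |2 * x - 2 * Real.cos θ| ≤ 3 := abs_w_le hx2 (Real.abs_cos_le_one θ)
    rw [Real.norm_eq_abs, abs_mul, abs_mul]
    have hinner : |(q - 1) * (x ^ 2 + 1 - 2 * x * Real.cos θ) ^ (q - 2) *
        ((2 * x - 2 * Real.cos θ) * (2 * x - 2 * Real.cos θ)) +
        (x ^ 2 + 1 - 2 * x * Real.cos θ) ^ (q - 1) * 2|
        ≤ |q - 1| * 4 ^ |q - 2| * (3 * 3) + 4 ^ |q - 1| * 2 := by
      refine (abs_add_le _ _).trans (add_le_add ?_ ?_)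
      · rw [abs_mul, abs_mul, abs_mul, abs_of_pos hrp2]
        refine mul_le_mul (mul_le_mul_of_nonneg_left (rpow_bound hb.1 hb.2 _) (abs_nonneg _))
          (mul_le_mul hw3 hw3 (abs_nonneg _) (by norm_num)) ?_ ?_
        · exact mul_nonneg (abs_nonneg _) (abs_nonneg _)
        · exact mul_nonneg (abs_nonneg _) (Real.rpow_pos_of_pos (by norm_num) _).le
      · rw [abs_mul, abs_of_pos hrp1]
        simpa using mul_le_mul_of_nonneg_right (rpow_bound hb.1 hb.2 (q - 1)) (by norm_num : (0:ℝ) ≤ |2|)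
    calc |Real.sin θ ^ d| * (|q| * |_root_.id ((q - 1) * (x ^ 2 + 1 - 2 * x * Real.cos θ) ^ (q - 2) *
        ((2 * x - 2 * Real.cos θ) * (2 * x - 2 * Real.cos θ)) +
        (x ^ 2 + 1 - 2 * x * Real.cos θ) ^ (q - 1) * 2)|)
        ≤ 1 * (|q| * (|q - 1| * 4 ^ |q - 2| * (3 * 3) + 4 ^ |q - 1| * 2)) := by
          simp only [_root_.id]
          refine mul_le_mul ?_ (mul_le_mul_of_nonneg_left hinner (abs_nonneg q))
            (mul_nonneg (abs_nonneg _) (abs_nonneg _)) (by norm_num)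
          rw [abs_pow]
          exact pow_le_one₀ (abs_nonneg _) (Real.abs_sin_le_one θ)
    _ = |q| * (|q - 1| * 4 ^ |q - 2| * (3 * 3) + 4 ^ |q - 1| * 2) := one_mul _
  · exact intervalIntegrable_const
  · refine Filter.Eventually.of_forall fun θ => fun _ => fun x hx => ?_
    rw [mem_ball, Real.dist_eq] at hx
    have hx' : |x| < 1 := by
      calc |x| ≤ |x - s₀| + |s₀| := by simpa using abs_add_le (x - s₀) s₀
      _ < 1 := by linarith
    exact hasDerivAt_integrand1 d q θ hx'


lemma hasDerivAt_J1 (d : ℕ) (q : ℝ) {s₀ : ℝ} (hs : |s₀| < 1/2) :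
    HasDerivAt (J1 d q)
      ((4 * q ^ 2 - 2 * q) * J d (q - 1) s₀ - 4 * q * (q - 1) * J (d + 2) (q - 2) s₀) s₀ := by
  have hs1 : |s₀| < 1 := hs.trans (by norm_num)
  have h := hasDerivAt_J1' d q hs
  have heq : (∫ θ in (0:ℝ)..π, Real.sin θ ^ d *
        (q * ((q - 1) * (s₀ ^ 2 + 1 - 2 * s₀ * Real.cos θ) ^ (q - 2) *
        ((2 * s₀ - 2 * Real.cos θ) * (2 * s₀ - 2 * Real.cos θ)) +
        (s₀ ^ 2 + 1 - 2 * s₀ * Real.cos θ) ^ (q - 1) * 2)))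
      = (4 * q ^ 2 - 2 * q) * J d (q - 1) s₀ - 4 * q * (q - 1) * J (d + 2) (q - 2) s₀ := by
    have hpt : ∀ θ : ℝ, Real.sin θ ^ d *
        (q * ((q - 1) * (s₀ ^ 2 + 1 - 2 * s₀ * Real.cos θ) ^ (q - 2) *
        ((2 * s₀ - 2 * Real.cos θ) * (2 * s₀ - 2 * Real.cos θ)) +
        (s₀ ^ 2 + 1 - 2 * s₀ * Real.cos θ) ^ (q - 1) * 2))
        = (4 * q ^ 2 - 2 * q) *
            (Real.sin θ ^ d * (s₀ ^ 2 + 1 - 2 * s₀ * Real.cos θ) ^ (q - 1)) -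
          4 * q * (q - 1) *
            (Real.sin θ ^ (d + 2) * (s₀ ^ 2 + 1 - 2 * s₀ * Real.cos θ) ^ (q - 2)) := by
      intro θ
      have hb := base_pos hs1 θ
      have e1 : (s₀ ^ 2 + 1 - 2 * s₀ * Real.cos θ) ^ (q - 1)
          = (s₀ ^ 2 + 1 - 2 * s₀ * Real.cos θ) ^ (q - 2) *
            (s₀ ^ 2 + 1 - 2 * s₀ * Real.cos θ) := by
        rw [show q - 1 = q - 2 + 1 by ring, Real.rpow_add_one hb.ne']
      have hpy := Real.sin_sq_add_cos_sq θ
      rw [e1, pow_add]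
      linear_combination (4 * q * (q - 1) * Real.sin θ ^ d *
        (s₀ ^ 2 + 1 - 2 * s₀ * Real.cos θ) ^ (q - 2)) * hpy
    rw [intervalIntegral.integral_congr (g := fun θ =>
      (4 * q ^ 2 - 2 * q) * (Real.sin θ ^ d * (s₀ ^ 2 + 1 - 2 * s₀ * Real.cos θ) ^ (q - 1)) -
      4 * q * (q - 1) * (Real.sin θ ^ (d + 2) * (s₀ ^ 2 + 1 - 2 * s₀ * Real.cos θ) ^ (q - 2)))
      (fun θ _ => hpt θ)]
    rw [intervalIntegral.integral_sub
      (((cont_integrand d (q - 1) hs1).intervalIntegrable 0 π).const_mul _)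
      (((cont_integrand (d + 2) (q - 2) hs1).intervalIntegrable 0 π).const_mul _),
      intervalIntegral.integral_const_mul, intervalIntegral.integral_const_mul]
    rfl
  rw [heq] at h
  exact h


lemma contDiffOn_J : ∀ (n : ℕ) (d : ℕ) (q : ℝ),
    ContDiffOn ℝ n (J d q) (ball (0:ℝ) (1/2)) ∧ ContDiffOn ℝ n (J1 d q) (ball (0:ℝ) (1/2)) := by
  intro n
  induction n with
  | zero =>
    intro d q
    constructor
    · rw [Nat.cast_zero, contDiffOn_zero]
      exact fun s hs => ((hasDerivAt_J d q ((mem_ball_abs _).mp hs)).differentiableAt.continuousAt).continuousWithinAt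
    · rw [Nat.cast_zero, contDiffOn_zero]
      exact fun s hs => ((hasDerivAt_J1 d q ((mem_ball_abs _).mp hs)).differentiableAt.continuousAt).continuousWithinAt
  | succ n ih =>
    intro d q
    constructor
    · rw [show ((n + 1 : ℕ) : WithTop ℕ∞) = (n : WithTop ℕ∞) + 1 by push_cast; ring,
        contDiffOn_succ_iff_deriv_of_isOpen isOpen_ball]
      refine ⟨fun s hs => (hasDerivAt_J d q ((mem_ball_abs _).mp hs)).differentiableAt.differentiableWithinAt,
        by simp, ?_⟩
      exact ((ih d q).2).congr fun s hs => (hasDerivAt_J d q ((mem_ball_abs _).mp hs)).deriv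
    · rw [show ((n + 1 : ℕ) : WithTop ℕ∞) = (n : WithTop ℕ∞) + 1 by push_cast; ring,
        contDiffOn_succ_iff_deriv_of_isOpen isOpen_ball]
      refine ⟨fun s hs => (hasDerivAt_J1 d q ((mem_ball_abs _).mp hs)).differentiableAt.differentiableWithinAt,
        by simp, ?_⟩
      have hc : ContDiffOn ℝ n
          (fun s => (4 * q ^ 2 - 2 * q) * J d (q - 1) s - 4 * q * (q - 1) * J (d + 2) (q - 2) s)
          (ball (0:ℝ) (1/2)) :=
        (contDiffOn_const.mul (ih d (q - 1)).1).sub (contDiffOn_const.mul (ih (d + 2) (q - 2)).1)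
      exact hc.congr fun s hs => (hasDerivAt_J1 d q ((mem_ball_abs _).mp hs)).deriv

lemma iteratedDeriv_eq_within {f : ℝ → ℝ} (n : ℕ) :
    iteratedDeriv n f 0 = iteratedDerivWithin n f (ball (0:ℝ) (1/2)) 0 := by
  have h0 : (0:ℝ) ∈ ball (0:ℝ) (1/2) := mem_ball_self (by norm_num)
  rw [iteratedDerivWithin_eq_iteratedFDerivWithin, iteratedDeriv_eq_iteratedFDeriv,
    iteratedFDerivWithin_of_isOpen n isOpen_ball h0]

lemma iteratedDeriv_comb {f g : ℝ → ℝ} {A B : ℝ} (n : ℕ)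
    (hf : ContDiffOn ℝ n f (ball (0:ℝ) (1/2))) (hg : ContDiffOn ℝ n g (ball (0:ℝ) (1/2))) :
    iteratedDeriv n (fun s => A * f s - B * g s) 0
      = A * iteratedDeriv n f 0 - B * iteratedDeriv n g 0 := by
  have h0 : (0:ℝ) ∈ ball (0:ℝ) (1/2) := mem_ball_self (by norm_num)
  have hU : UniqueDiffOn ℝ (ball (0:ℝ) (1/2)) := isOpen_ball.uniqueDiffOn
  rw [iteratedDeriv_eq_within n, iteratedDeriv_eq_within n, iteratedDeriv_eq_within n]
  have hsplit : (fun s => A * f s - B * g s) = (fun s => A * f s) - (fun s => B * g s) := rfl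
  rw [hsplit, iteratedDerivWithin_sub h0 hU (contDiffOn_const.mul hf 0 h0) (contDiffOn_const.mul hg 0 h0),
    iteratedDerivWithin_const_mul h0 hU A (hf 0 h0), iteratedDerivWithin_const_mul h0 hU B (hg 0 h0)]


noncomputable def Bd (d : ℕ) : ℝ :=
  Real.Gamma (1/2) * Real.Gamma (((d:ℝ) + 1) / 2) / Real.Gamma (1/2 + ((d:ℝ) + 1) / 2)

lemma Bd_pos (d : ℕ) : 0 < Bd d := by
  unfold Bd
  have h1 : 0 < Real.Gamma (1/2) := Real.Gamma_pos_of_pos (by norm_num)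
  have h2 : 0 < Real.Gamma (((d:ℝ) + 1) / 2) := Real.Gamma_pos_of_pos (by positivity)
  have h3 : 0 < Real.Gamma (1/2 + ((d:ℝ) + 1) / 2) := Real.Gamma_pos_of_pos (by positivity)
  positivity

lemma Bd_succ (d : ℕ) : Bd (d + 2) = Bd d * (((d:ℝ) + 1) / ((d:ℝ) + 2)) := by
  unfold Bd
  have hd1 : (((d + 2 : ℕ) : ℝ) + 1) / 2 = ((d:ℝ) + 1) / 2 + 1 := by push_cast; ring
  have hd2 : 1/2 + (((d:ℝ) + 1) / 2 + 1) = (1/2 + ((d:ℝ) + 1) / 2) + 1 := by ring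
  rw [hd1, hd2, Real.Gamma_add_one (by positivity : ((d:ℝ) + 1) / 2 ≠ 0),
    Real.Gamma_add_one (by positivity : (1/2 + ((d:ℝ) + 1) / 2) ≠ 0)]
  have h3 : 0 < Real.Gamma (1/2 + ((d:ℝ) + 1) / 2) := Real.Gamma_pos_of_pos (by positivity)
  have h4 : (0:ℝ) < (d:ℝ) + 2 := by positivity
  field_simp
  ring

lemma I_eq : ∀ d : ℕ, (∫ θ in (0:ℝ)..π, Real.sin θ ^ d) = Bd d := by
  intro d
  induction d using Nat.twoStepInduction with
  | zero =>
    simp only [pow_zero, intervalIntegral.integral_const, smul_eq_mul, mul_one, sub_zero]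
    unfold Bd
    norm_num
    rw [Real.Gamma_one_half_eq]
    exact (Real.mul_self_sqrt Real.pi_pos.le).symm
  | one =>
    simp only [pow_one, integral_sin, Real.cos_zero, Real.cos_pi]
    unfold Bd
    norm_num
    rw [show (3:ℝ)/2 = 1/2 + 1 by norm_num, Real.Gamma_add_one (by norm_num : (1:ℝ)/2 ≠ 0)]
    have h1 : 0 < Real.Gamma (1/2) := Real.Gamma_pos_of_pos (by norm_num)
    field_simp
  | more d ih _ =>
    have key := integral_sin_pow d (a := 0) (b := π)
    rw [Real.sin_zero, Real.sin_pi, zero_pow (Nat.succ_ne_zero d), zero_mul, zero_mul,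
      sub_zero, zero_div, zero_add] at key
    rw [key, ih, Bd_succ]
    push_cast
    ring


lemma prod_shift (x : ℝ) (n : ℕ) :
    (∏ k ∈ range n, (x + 2 * (k:ℝ))) * (x + 2 * (n:ℝ))
      = x * ∏ k ∈ range n, (x + 2 + 2 * (k:ℝ)) := by
  have hB := Finset.prod_range_succ' (fun k => (x + 2 * (k:ℝ))) n
  rw [Finset.prod_range_succ (fun k => (x + 2 * (k:ℝ))) n] at hB
  rw [hB, show (∏ k ∈ range n, (x + 2 * (((k + 1:ℕ)):ℝ)))
      = ∏ k ∈ range n, (x + 2 + 2 * (k:ℝ)) from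
    Finset.prod_congr rfl fun k _ => by push_cast; ring]
  push_cast; ring

lemma prod_succ_lo (x : ℝ) (n : ℕ) :
    (∏ k ∈ range (n + 1), (x + 2 * (k:ℝ))) = x * ∏ k ∈ range n, (x + 2 + 2 * (k:ℝ)) := by
  rw [← prod_shift, Finset.prod_range_succ]


lemma key : ∀ (n : ℕ) (d : ℕ) (α : ℝ), 0 < α →
    iteratedDeriv (2 * n) (J d (-(((d:ℝ) + α) / 2))) 0 =
      Bd d * (∏ k ∈ range n, (2 * (k:ℝ) + 1)) * (∏ k ∈ range n, (α + 2 * (k:ℝ))) *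
        (∏ k ∈ range n, ((d:ℝ) + α + 2 * (k:ℝ))) /
        (∏ k ∈ range n, ((d:ℝ) + 2 * ((k:ℝ) + 1))) := by
  intro n
  induction n with
  | zero =>
    intro d α hα
    simp only [Nat.mul_zero, iteratedDeriv_zero, prod_range_zero, mul_one, div_one]
    have hJ0 : J d (-(((d:ℝ) + α) / 2)) 0 = ∫ θ in (0:ℝ)..π, Real.sin θ ^ d := by
      unfold J
      refine intervalIntegral.integral_congr fun θ _ => ?_
      norm_num
    rw [hJ0, I_eq]
  | succ n ih =>
    intro d α hα
    set q : ℝ := -(((d:ℝ) + α) / 2) with hq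
    have h2 : 2 * (n + 1) = 2 * n + 1 + 1 := by ring
    rw [h2, iteratedDeriv_succ', iteratedDeriv_succ']
    have hEq : deriv (deriv (J d q)) =ᶠ[𝓝 (0:ℝ)]
        (fun s => (4 * q ^ 2 - 2 * q) * J d (q - 1) s -
          4 * q * (q - 1) * J (d + 2) (q - 2) s) := by
      filter_upwards [Metric.ball_mem_nhds (0:ℝ) (by norm_num : (0:ℝ) < 1/2)] with s hs
      have hs' : |s| < 1/2 := (mem_ball_abs _).mp hs
      have h1 : deriv (J d q) =ᶠ[𝓝 s] J1 d q := by
        filter_upwards [isOpen_ball.mem_nhds hs] with x hx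
        exact (hasDerivAt_J d q ((mem_ball_abs _).mp hx)).deriv
      rw [h1.deriv_eq, (hasDerivAt_J1 d q hs').deriv]
    rw [Filter.EventuallyEq.iteratedDeriv_eq (2 * n) hEq,
      iteratedDeriv_comb (2 * n) (contDiffOn_J (2 * n) d (q - 1)).1
        (contDiffOn_J (2 * n) (d + 2) (q - 2)).1]
    have e1 : q - 1 = -(((d:ℝ) + (α + 2)) / 2) := by rw [hq]; ring
    have e2 : q - 2 = -((((d + 2 : ℕ):ℝ) + (α + 2)) / 2) := by rw [hq]; push_cast; ring
    rw [e1, e2, ih d (α + 2) (by linarith), ih (d + 2) (α + 2) (by linarith)]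
    -- algebra
    rw [Bd_succ d]
    rw [show (∏ k ∈ range n, ((d:ℝ) + (α + 2) + 2 * (k:ℝ)))
        = ∏ k ∈ range n, ((d:ℝ) + α + 2 + 2 * (k:ℝ)) from
      Finset.prod_congr rfl fun k _ => by ring]
    rw [show (∏ k ∈ range n, (((d + 2:ℕ):ℝ) + (α + 2) + 2 * (k:ℝ)))
        = ∏ k ∈ range n, ((d:ℝ) + α + 2 + 2 + 2 * (k:ℝ)) from
      Finset.prod_congr rfl fun k _ => by push_cast; ring]
    rw [show (∏ k ∈ range n, ((d:ℝ) + 2 * ((k:ℝ) + 1)))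
        = ∏ k ∈ range n, ((d:ℝ) + 2 + 2 * (k:ℝ)) from
      Finset.prod_congr rfl fun k _ => by ring]
    rw [show (∏ k ∈ range n, (((d + 2:ℕ):ℝ) + 2 * ((k:ℝ) + 1)))
        = ∏ k ∈ range n, ((d:ℝ) + 2 + 2 + 2 * (k:ℝ)) from
      Finset.prod_congr rfl fun k _ => by push_cast; ring]
    rw [Finset.prod_range_succ (fun k => (2 * (k:ℝ) + 1)) n]
    rw [show (∏ k ∈ range (n + 1), (α + 2 * (k:ℝ)))
        = α * ∏ k ∈ range n, (α + 2 + 2 * (k:ℝ)) from prod_succ_lo α n]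
    rw [show (∏ k ∈ range (n + 1), ((d:ℝ) + α + 2 * (k:ℝ)))
        = ((d:ℝ) + α) * ∏ k ∈ range n, ((d:ℝ) + α + 2 + 2 * (k:ℝ)) from
      prod_succ_lo ((d:ℝ) + α) n]
    rw [show (∏ k ∈ range (n + 1), ((d:ℝ) + 2 * ((k:ℝ) + 1)))
        = ∏ k ∈ range (n + 1), ((d:ℝ) + 2 + 2 * (k:ℝ)) from
      Finset.prod_congr rfl fun k _ => by ring]
    rw [Finset.prod_range_succ (fun k => ((d:ℝ) + 2 + 2 * (k:ℝ))) n]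
    have s1 := prod_shift ((d:ℝ) + α + 2) n
    have s2 := prod_shift ((d:ℝ) + 2) n
    have pX3 : (0:ℝ) < ∏ k ∈ range n, ((d:ℝ) + α + 2 + 2 * (k:ℝ)) :=
      Finset.prod_pos fun k _ => by positivity
    have pY0 : (0:ℝ) < ∏ k ∈ range n, ((d:ℝ) + 2 + 2 * (k:ℝ)) :=
      Finset.prod_pos fun k _ => by positivity
    have pda2 : (0:ℝ) < (d:ℝ) + α + 2 := by positivity
    have pd2 : (0:ℝ) < (d:ℝ) + 2 := by positivity
    have pn2 : (0:ℝ) < (d:ℝ) + 2 + 2 * (n:ℝ) := by positivity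
    have hX4 : (∏ k ∈ range n, ((d:ℝ) + α + 2 + 2 + 2 * (k:ℝ)))
        = (∏ k ∈ range n, ((d:ℝ) + α + 2 + 2 * (k:ℝ))) * ((d:ℝ) + α + 2 + 2 * (n:ℝ))
          / ((d:ℝ) + α + 2) := by
      rw [eq_div_iff pda2.ne']
      linear_combination -s1
    have hY2 : (∏ k ∈ range n, ((d:ℝ) + 2 + 2 + 2 * (k:ℝ)))
        = (∏ k ∈ range n, ((d:ℝ) + 2 + 2 * (k:ℝ))) * ((d:ℝ) + 2 + 2 * (n:ℝ))
          / ((d:ℝ) + 2) := by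
      rw [eq_div_iff pd2.ne']
      linear_combination -s2
    rw [hX4, hY2, hq]
    field_simp
    ring

end Stmt5Aux

open Real Finset

/-- Explicit formula and positivity for the even derivatives of f(·,d,α) at 0. -/
theorem stmt_5 (d : ℕ) (hd : 2 ≤ d) (α : ℝ) (hα : 0 < α) (n : ℕ) :
    iteratedDeriv (2 * n) (fun s : ℝ =>
        ∫ θ in (0:ℝ)..π,
          Real.sin θ ^ d / (s ^ 2 + 1 - 2 * s * Real.cos θ) ^ (((d : ℝ) + α) / 2)) 0
      = (Real.Gamma (1 / 2) * Real.Gamma (((d : ℝ) + 1) / 2) /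
            Real.Gamma (1 / 2 + ((d : ℝ) + 1) / 2)) *
          (∏ k ∈ Finset.range n, ((2 * (k : ℝ) + 1))) *
          (∏ k ∈ Finset.range n, (α + 2 * (k : ℝ))) *
          (∏ k ∈ Finset.range n, ((d : ℝ) + α + 2 * (k : ℝ))) /
          (∏ k ∈ Finset.range n, ((d : ℝ) + 2 * ((k : ℝ) + 1)))
    ∧ 0 < iteratedDeriv (2 * n) (fun s : ℝ =>
        ∫ θ in (0:ℝ)..π,
          Real.sin θ ^ d / (s ^ 2 + 1 - 2 * s * Real.cos θ) ^ (((d : ℝ) + α) / 2)) 0 := by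
  have hf : (fun s : ℝ =>
      ∫ θ in (0:ℝ)..π,
        Real.sin θ ^ d / (s ^ 2 + 1 - 2 * s * Real.cos θ) ^ (((d : ℝ) + α) / 2))
      =ᶠ[nhds (0:ℝ)] Stmt5Aux.J d (-(((d:ℝ) + α) / 2)) := by
    filter_upwards [Metric.ball_mem_nhds (0:ℝ) (by norm_num : (0:ℝ) < 1/2)] with s hs
    have hs1 : |s| < 1 := lt_trans ((Stmt5Aux.mem_ball_abs _).mp hs) (by norm_num)
    unfold Stmt5Aux.J
    refine intervalIntegral.integral_congr fun θ _ => ?_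
    rw [Real.rpow_neg (Stmt5Aux.base_pos hs1 θ).le, div_eq_mul_inv]
  have e := Filter.EventuallyEq.iteratedDeriv_eq (2 * n) hf
  have hkey := Stmt5Aux.key n d α hα
  have hGpos : 0 < Real.Gamma (1 / 2) * Real.Gamma (((d : ℝ) + 1) / 2) /
      Real.Gamma (1 / 2 + ((d : ℝ) + 1) / 2) := Stmt5Aux.Bd_pos d
  constructor
  · rw [e, hkey, Stmt5Aux.Bd]
  · rw [e, hkey, Stmt5Aux.Bd]
    refine div_pos ?_ (Finset.prod_pos fun k _ => by positivity)
    refine mul_pos (mul_pos (mul_pos hGpos ?_) ?_) ?_ <;>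
      exact Finset.prod_pos fun k _ => by positivity
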